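/- Let A = {x, y} and α = xy. In the monoid M with presentation ⟨x, y | xyyxxxyxxyyxxxy = xy⟩, both sides of the defining relation lie in αA* ∩ A*α, and factorizing over the suffix code Σ∗ = α(A* − A*αA*) yields the left pieces Σ = {xyx, xyyxx}; that is, xyyxxxyxxyyxxxy = (xyyxx)(xyx)(xyyxx)·xy and xy = xy, so the left monoid L(M) is presented by ⟨γ_1, γ_2 | γ_2 γ_1 γ_2 = 1⟩. -/

import Mathlib

def IsFactor {A : Type*} (α w : List A) : Prop :=
  ∃ x y : List A, w = x ++ α ++ y

def SigmaStar {A : Type*} (α : List A) : Set (List A) :=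
  { w | ∃ t : List A, w = α ++ t ∧ ¬ IsFactor α t }

lemma isFactor_iff_infix {A : Type*} (α w : List A) : IsFactor α w ↔ α <:+: w := by
  constructor
  · rintro ⟨x, y, rfl⟩; exact ⟨x, y, rfl⟩
  · rintro ⟨x, y, rfl⟩; exact ⟨x, y, rfl⟩

lemma mem_sigma {w : List (Fin 2)} (h : w ∈ SigmaStar [0, 1]) :
    ∃ t, w = [0, 1] ++ t ∧ ¬ ([0, 1] : List (Fin 2)) <:+: t := by
  obtain ⟨t, ht, hf⟩ := h
  exact ⟨t, ht, fun hi => hf ((isFactor_iff_infix _ _).2 hi)⟩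

lemma flatten_prefix (l : List (List (Fin 2))) (hl : ∀ w ∈ l, w ∈ SigmaStar [0, 1]) :
    ([0, 1] : List (Fin 2)) <+: l.flatten ++ [0, 1] := by
  cases l with
  | nil => exact List.prefix_refl _
  | cons w l' =>
      obtain ⟨t, rfl, -⟩ := mem_sigma (hl w List.mem_cons_self)
      exact ⟨t ++ l'.flatten ++ [0, 1], by simp⟩

lemma flatten_nil (l : List (List (Fin 2))) (hl : ∀ w ∈ l, w ∈ SigmaStar [0, 1])
    (h : l.flatten ++ ([0, 1] : List (Fin 2)) = [0, 1]) : l = [] := by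
  cases l with
  | nil => rfl
  | cons w l' =>
      obtain ⟨t, rfl, -⟩ := mem_sigma (hl w List.mem_cons_self)
      simp only [List.flatten_cons, List.append_assoc] at h
      have := congrArg List.length h
      simp at this

/-- One decoding step: from `l.flatten ++ α = α ++ K` deduce that the first
piece of `l` is `α ++ ans`, provided a finite check certifies `ans` is the
unique admissible split of `K`. -/
lemma decode_step (K ans rest : List (Fin 2)) (hK : K ≠ [])
    (key : ∀ n < K.length,
      (¬ ([0, 1] : List (Fin 2)) <:+: K.take n ∧ ([0, 1] : List (Fin 2)) <+: K.drop n) →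
        K.take n = ans ∧ K.drop n = rest)
    (l : List (List (Fin 2))) (hl : ∀ w ∈ l, w ∈ SigmaStar [0, 1])
    (h : l.flatten ++ ([0, 1] : List (Fin 2)) = [0, 1] ++ K) :
    ∃ l', l = ([0, 1] ++ ans) :: l' ∧ (∀ w ∈ l', w ∈ SigmaStar [0, 1]) ∧
      l'.flatten ++ ([0, 1] : List (Fin 2)) = rest := by
  cases l with
  | nil =>
      exfalso
      apply hK
      simpa using h.symm
  | cons w l' =>
      obtain ⟨t, rfl, hni⟩ := mem_sigma (hl w List.mem_cons_self)
      have hl' : ∀ w ∈ l', w ∈ SigmaStar [0, 1] := fun w hw => hl w (List.mem_cons_of_mem _ hw)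
      simp only [List.flatten_cons, List.append_assoc] at h
      have h2 : t ++ (l'.flatten ++ [0, 1]) = K := by
        have := List.append_cancel_left (as := ([0, 1] : List (Fin 2))) (by simpa using h)
        simpa using this
      set R : List (Fin 2) := l'.flatten ++ [0, 1] with hR
      have hRpre : ([0, 1] : List (Fin 2)) <+: R := flatten_prefix l' hl'
      have hlen : t.length + R.length = K.length := by
        have := congrArg List.length h2; simpa using this
      have hR2 : 2 ≤ R.length := hRpre.length_le
      have htake : K.take t.length = t := by
        rw [← h2]; exact List.take_left
      have hdrop : K.drop t.length = R := by
        rw [← h2]; exact List.drop_left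
      have hn : t.length < K.length := by omega
      have := key t.length hn ⟨by rwa [htake], by rwa [hdrop]⟩
      refine ⟨l', ?_, hl', ?_⟩
      · rw [← htake, this.1]
      · show R = rest
        rw [← hdrop, this.2]

/-- With `x := 0`, `y := 1`, `α := xy`: in `⟨x, y | xyyxxxyxxyyxxxy = xy⟩`, both
sides of the defining relation begin and end with `α`; factorising over the
suffix code `Σ∗ = α(A* − A*αA*)` yields left pieces `Σ = {xyx, xyyxx}`, the
left-hand side factoring (uniquely) as `(xyyxx)(xyx)(xyyxx)·xy` and the
right-hand side as the empty product times `xy`, so the left monoid `L(M)` is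
presented by `⟨γ₁, γ₂ | γ₂γ₁γ₂ = 1⟩` (coding `xyx ↦ γ₁ := 0`, `xyyxx ↦ γ₂ := 1`). -/
theorem compression_example :
    let x : Fin 2 := 0
    let y : Fin 2 := 1
    let α : List (Fin 2) := [x, y]
    let lhs : List (Fin 2) := [x, y, y, x, x, x, y, x, x, y, y, x, x, x, y]
    let rhs : List (Fin 2) := [x, y]
    let p₁ : List (Fin 2) := [x, y, x]
    let p₂ : List (Fin 2) := [x, y, y, x, x]
    (α <+: lhs) ∧ (α <:+ lhs) ∧ (α <+: rhs) ∧ (α <:+ rhs) ∧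
    lhs = p₂ ++ p₁ ++ p₂ ++ α ∧ rhs = α ∧
    p₁ ∈ SigmaStar α ∧ p₂ ∈ SigmaStar α ∧
    (∀ l : List (List (Fin 2)), (∀ w ∈ l, w ∈ SigmaStar α) →
      l.flatten ++ α = lhs → l = [p₂, p₁, p₂]) ∧
    (∀ l : List (List (Fin 2)), (∀ w ∈ l, w ∈ SigmaStar α) →
      l.flatten ++ α = rhs → l = []) ∧
    ([p₂, p₁, p₂].map fun w => if w = p₁ then (0 : Fin 2) else 1) = [1, 0, 1] := by
  intro x y α lhs rhs p₁ p₂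
  refine ⟨⟨[y, x, x, x, y, x, x, y, y, x, x, x, y], rfl⟩,
    ⟨[x, y, y, x, x, x, y, x, x, y, y, x, x], rfl⟩,
    ⟨[], rfl⟩, ⟨[], rfl⟩, rfl, rfl,
    ⟨[x], rfl, ?_⟩, ⟨[y, x, x], rfl, ?_⟩, ?_, ?_, rfl⟩
  · rw [isFactor_iff_infix]; decide
  · rw [isFactor_iff_infix]; decide
  · intro l hl h
    obtain ⟨l₁, rfl, hl₁, h₁⟩ := decode_step
      [1, 0, 0, 0, 1, 0, 0, 1, 1, 0, 0, 0, 1] [1, 0, 0] [0, 1, 0, 0, 1, 1, 0, 0, 0, 1]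
      (by decide) (by decide) l hl h
    obtain ⟨l₂, rfl, hl₂, h₂⟩ := decode_step
      [0, 0, 1, 1, 0, 0, 0, 1] [0] [0, 1, 1, 0, 0, 0, 1]
      (by decide) (by decide) l₁ hl₁ h₁
    obtain ⟨l₃, rfl, hl₃, h₃⟩ := decode_step
      [1, 0, 0, 0, 1] [1, 0, 0] [0, 1]
      (by decide) (by decide) l₂ hl₂ h₂
    rw [flatten_nil l₃ hl₃ h₃]
    rfl
  · intro l hl h
    exact flatten_nil l hl h
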